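/- (Lower bound for the regenerative numerator) For any nonnegative function r : S → ℝ₊, the quantity κ̲(r) = r(z) + ν̃ (I − B̃)^{-1} r̃, where r̃ is r restricted to A', satisfies κ̲(r) = E_z[ ∑_{j=0}^{(τ(z)∧T)−1} r(X_j) ] ≤ E_z[ ∑_{j=0}^{τ(z)−1} r(X_j) ]. In particular, with r = 1, κ̲(e) = 1 + ν̃ (I − B̃)^{-1} ẽ ≤ E_z[τ(z)]. -/

import Mathlib

open MeasureTheory ENNReal Filter

noncomputable section

namespace MCTrunc

variable {S : Type*}

/-- `P` is a (row-)stochastic matrix on the state space `S`: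
nonnegative entries and rows summing to one. -/
def IsStochasticMatrix (P : S → S → ℝ) : Prop :=
  (∀ x y, 0 ≤ P x y) ∧ ∀ x, HasSum (fun y => P x y) 1

open scoped Classical in
/-- `n`-step transition probabilities associated with `P`. -/
def stepIter (P : S → S → ℝ) : ℕ → S → S → ℝ
  | 0 => fun x y => if x = y then 1 else 0
  | n + 1 => fun x y => ∑' w, stepIter P n x w * P w y

/-- Irreducibility of the transition matrix `P`. -/
def IsIrreducibleMatrix (P : S → S → ℝ) : Prop :=
  ∀ x y, ∃ n : ℕ, 0 < stepIter P n x y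

/-- `μ x` is the law of the Markov chain with one-step transition matrix `P`
started at `x`, specified through its finite-dimensional distributions. -/
def IsMarkovChain [MeasurableSpace S] (P : S → S → ℝ) (μ : S → Measure (ℕ → S)) : Prop :=
  (∀ x, IsProbabilityMeasure (μ x)) ∧
  ∀ (n : ℕ) (path : ℕ → S),
    μ (path 0) {ω | ∀ i ≤ n, ω i = path i} =
      ENNReal.ofReal (∏ i ∈ Finset.range n, P (path i) (path (i + 1)))

/-- First hitting time `inf {n ≥ 0 : X_n ∈ C}`, valued in `ℕ∞`. -/
def hitTime (C : Set S) (ω : ℕ → S) : ℕ∞ :=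
  sInf {m : ℕ∞ | ∃ n : ℕ, m = n ∧ ω n ∈ C}

/-- First hitting time of `C` strictly after time `θ`:
`inf {n : θ < n, X_n ∈ C}`. -/
def hitTimeAfter (C : Set S) (θ : ℕ∞) (ω : ℕ → S) : ℕ∞ :=
  sInf {m : ℕ∞ | ∃ n : ℕ, m = n ∧ θ < (n : ℕ∞) ∧ ω n ∈ C}

/-- First return time `τ(z) = inf {n ≥ 1 : X_n = z}`. -/
def retTime (z : S) (ω : ℕ → S) : ℕ∞ :=
  sInf {m : ℕ∞ | ∃ n : ℕ, m = n ∧ 1 ≤ n ∧ ω n = z}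

open scoped Classical in
/-- `∑_{a ≤ j < b} r(X_j)` along the path `ω`, valued in `ℝ≥0∞`. -/
def sumOver (r : S → ℝ) (a b : ℕ∞) (ω : ℕ → S) : ℝ≥0∞ :=
  ∑' j : ℕ, if a ≤ (j : ℕ∞) ∧ (j : ℕ∞) < b then ENNReal.ofReal (r (ω j)) else 0

/-- `∑_{0 ≤ j < b} r(X_j)` along the path `ω`. -/
def sumBefore (r : S → ℝ) (b : ℕ∞) (ω : ℕ → S) : ℝ≥0∞ := sumOver r 0 b ω

/-- The chain is positive recurrent: from every state, the expected return time
to that state is finite. -/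
def IsPositiveRecurrent [MeasurableSpace S] (μ : S → Measure (ℕ → S)) : Prop :=
  ∀ x : S, ∫⁻ ω, sumBefore (fun _ => 1) (retTime x ω) ω ∂ μ x < ⊤

/-- The chain is recurrent: every state is revisited almost surely. -/
def IsRecurrent [MeasurableSpace S] (μ : S → Measure (ℕ → S)) : Prop :=
  ∀ x : S, μ x {ω | retTime x ω < ⊤} = 1

variable [DecidableEq S]

/-- The substochastic matrix `B̃ = (P(x,y) : x, y ∈ A' = A \ {z})`. -/
def trB (P : S → S → ℝ) (z : S) (A : Finset S) :
    Matrix ↥(A.erase z) ↥(A.erase z) ℝ :=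
  Matrix.of fun x y => P x y

/-- The row vector `ν̃ = (P(z,x) : x ∈ A')`. -/
def trNu (P : S → S → ℝ) (z : S) (A : Finset S) : ↥(A.erase z) → ℝ := fun x => P z x

/-- The column vector `p̃ = (P(x,z) : x ∈ A')`. -/
def trCol (P : S → S → ℝ) (z : S) (A : Finset S) : ↥(A.erase z) → ℝ := fun x => P x z

/-- The all-ones column vector `ẽ` on `A'`. -/
def trE (z : S) (A : Finset S) : ↥(A.erase z) → ℝ := fun _ => 1

/-- Restriction of `f : S → ℝ` to `A' = A \ {z}`. -/
def trRes (f : S → ℝ) (z : S) (A : Finset S) : ↥(A.erase z) → ℝ := fun x => f x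

/-- The truncation approximation `π̃` to the stationary distribution:
`π̃(x) = (ν̃ (I - B̃)⁻¹)(x) / (1 + ν̃ (I - B̃)⁻¹ ẽ)` for `x ∈ A'`,
`π̃(z) = (1 + ν̃ (I - B̃)⁻¹ ẽ)⁻¹`, and `π̃ = 0` off `A`. -/
def trPi (P : S → S → ℝ) (z : S) (A : Finset S) (x : S) : ℝ :=
  let row := Matrix.vecMul (trNu P z A) (1 - trB P z A)⁻¹
  let D : ℝ := 1 + dotProduct row (trE z A)
  if x = z then 1 / D
  else if hx : x ∈ A.erase z then row ⟨x, hx⟩ / D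
  else 0

/-- `max {|v x| : x ∈ T}` (as a supremum). -/
def supOn {ι : Type*} (T : Set ι) (v : ι → ℝ) : ℝ := sSup ((fun x => |v x|) '' T)

/-- `min {v x : x ∈ T}` (as an infimum). -/
def infOn {ι : Type*} (T : Set ι) (v : ι → ℝ) : ℝ := sInf (v '' T)

/-- The excursion times `Γ_i`: `Γ_0 = 0`, `Γ_i = inf {n > T_i : X_n ∈ K}` where
`T_1 = inf {n ≥ 0 : X_n ∈ A^c}` and `T_{i+1} = inf {n > Γ_i : X_n ∈ A^c}`. -/
def excGamma (Acomp K : Set S) (ω : ℕ → S) : ℕ → ℕ∞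
  | 0 => 0
  | 1 => hitTimeAfter K (hitTime Acomp ω) ω
  | i + 2 => hitTimeAfter K (hitTimeAfter Acomp (excGamma Acomp K ω (i + 1)) ω) ω

/-- `N = inf {n ≥ 1 : τ(z) < Γ_n}`. -/
def excN (z : S) (Acomp K : Set S) (ω : ℕ → S) : ℕ∞ :=
  sInf {m : ℕ∞ | ∃ n : ℕ, m = n ∧ 1 ≤ n ∧ retTime z ω < excGamma Acomp K ω n}

/-- Entries of the powers `B^n` of the taboo matrix `B = (P(x,y) : x,y ∈ S \ {z})`,
valued in `ℝ≥0∞`. -/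
def tabooPow (P : S → S → ℝ) (z : S) : ℕ → S → S → ℝ≥0∞
  | 0 => fun x y => if x = y then 1 else 0
  | n + 1 => fun x y =>
      ∑' w : S, if w = z then 0 else tabooPow P z n x w * ENNReal.ofReal (P w y)

end MCTrunc

namespace MCTrunc

section Aux

open scoped Classical

variable {S : Type*}

lemma lt_sInf_iff_nat {T : Set ℕ∞} {j : ℕ} : (j : ℕ∞) < sInf T ↔ ∀ m ∈ T, (j : ℕ∞) < m := by
  have hj : (j : ℕ∞) ≠ ⊤ := by simp
  rw [← ENat.add_one_le_iff hj, le_sInf_iff]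
  exact forall₂_congr fun m _ => ENat.add_one_le_iff hj

lemma lt_hitTime_iff {C : Set S} {ω : ℕ → S} {j : ℕ} :
    (j : ℕ∞) < hitTime C ω ↔ ∀ n : ℕ, n ≤ j → ω n ∉ C := by
  rw [hitTime, lt_sInf_iff_nat]
  constructor
  · intro h n hn hC
    have := h (n : ℕ∞) ⟨n, rfl, hC⟩
    exact absurd (by exact_mod_cast this) (Nat.not_lt.2 hn)
  · rintro h m ⟨n, rfl, hC⟩
    by_contra hle
    exact h n (by exact_mod_cast Nat.le_of_not_lt fun hl => hle (by exact_mod_cast hl)) hC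

lemma lt_retTime_iff {z : S} {ω : ℕ → S} {j : ℕ} :
    (j : ℕ∞) < retTime z ω ↔ ∀ n : ℕ, 1 ≤ n → n ≤ j → ω n ≠ z := by
  rw [retTime, lt_sInf_iff_nat]
  constructor
  · intro h n h1 hn hz
    have := h (n : ℕ∞) ⟨n, rfl, h1, hz⟩
    exact absurd (by exact_mod_cast this) (Nat.not_lt.2 hn)
  · rintro h m ⟨n, rfl, h1, hz⟩
    by_contra hle
    exact h n h1 (by exact_mod_cast Nat.le_of_not_lt fun hl => hle (by exact_mod_cast hl)) hz

/-- The cylinder set determined by the first `j+1` coordinates. -/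
def cyl (j : ℕ) (x : Fin (j + 1) → S) : Set (ℕ → S) := {ω | ∀ i : Fin (j + 1), ω i = x i}

variable [MeasurableSpace S] [MeasurableSingletonClass S]

lemma measurableSet_cyl (j : ℕ) (x : Fin (j + 1) → S) : MeasurableSet (cyl j x) := by
  have h : cyl j x = ⋂ i : Fin (j + 1), (fun ω : ℕ → S => ω i) ⁻¹' {x i} := by
    ext ω; simp [cyl, Set.mem_iInter]
  rw [h]
  exact MeasurableSet.iInter fun i =>
    measurable_pi_apply (i : ℕ) (measurableSet_singleton (x i))

variable [Countable S]

lemma measurable_coords (j : ℕ) (g : (Fin (j + 1) → S) → ℝ≥0∞) :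
    Measurable fun ω : ℕ → S => g fun i => ω i := by
  intro s _
  have h : (fun ω : ℕ → S => g fun i => ω i) ⁻¹' s
      = ⋃ x : {x : Fin (j + 1) → S // g x ∈ s}, cyl j x.1 := by
    ext ω
    simp only [Set.mem_iUnion, Set.mem_preimage]
    constructor
    · intro h; exact ⟨⟨fun i => ω i, h⟩, fun i => rfl⟩
    · rintro ⟨⟨x, hx⟩, hmem⟩
      have hxe : (fun i : Fin (j + 1) => ω i) = x := funext fun i => hmem i
      rwa [hxe]
  rw [h]
  exact MeasurableSet.iUnion fun x => measurableSet_cyl j x.1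

lemma lintegral_coords (μ : MeasureTheory.Measure (ℕ → S)) (j : ℕ)
    (g : (Fin (j + 1) → S) → ℝ≥0∞) :
    ∫⁻ ω, g (fun i => ω i) ∂ μ = ∑' x : Fin (j + 1) → S, g x * μ (cyl j x) := by
  have h1 : ∀ ω : ℕ → S,
      g (fun i => ω i) = ∑' x : Fin (j + 1) → S, (cyl j x).indicator (fun _ => g x) ω := by
    intro ω
    rw [tsum_eq_single (fun i : Fin (j + 1) => ω i) ?_]
    · rw [Set.indicator_of_mem]
      exact fun i => rfl
    · intro x hx
      rw [Set.indicator_of_notMem]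
      intro hmem
      exact hx (funext fun i => (hmem i).symm)
  rw [show (fun ω : ℕ → S => g fun i => ω i)
      = fun ω => ∑' x : Fin (j + 1) → S, (cyl j x).indicator (fun _ => g x) ω from funext h1]
  rw [MeasureTheory.lintegral_tsum fun x =>
    (measurable_const.indicator (measurableSet_cyl j x)).aemeasurable]
  congr 1
  ext x
  rw [MeasureTheory.lintegral_indicator_const (measurableSet_cyl j x)]

variable {P : S → S → ℝ} {μ : S → MeasureTheory.Measure (ℕ → S)}

lemma meas_start (hμ : IsMarkovChain P μ) (z : S) : μ z {ω : ℕ → S | ω 0 = z} = 1 := by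
  have h := hμ.2 0 (fun _ => z)
  simp only [Finset.range_zero, Finset.prod_empty, ENNReal.ofReal_one] at h
  have hset : {ω : ℕ → S | ∀ i ≤ 0, ω i = (fun _ => z) i} = {ω : ℕ → S | ω 0 = z} := by
    ext ω
    constructor
    · intro h'; exact h' 0 le_rfl
    · intro h' i hi
      cases Nat.le_zero.mp hi
      exact h'
  rwa [hset] at h

lemma meas_start_compl (hμ : IsMarkovChain P μ) (z : S) : μ z {ω : ℕ → S | ω 0 ≠ z} = 0 := by
  have hms : MeasurableSet {ω : ℕ → S | ω 0 = z} := by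
    have h : {ω : ℕ → S | ω 0 = z} = (fun ω : ℕ → S => ω 0) ⁻¹' {z} := rfl
    rw [h]
    exact measurable_pi_apply 0 (measurableSet_singleton z)
  have := hμ.1 z
  have hc : {ω : ℕ → S | ω 0 ≠ z} = {ω : ℕ → S | ω 0 = z}ᶜ := rfl
  rw [hc, MeasureTheory.prob_compl_eq_zero_iff hms]
  exact meas_start hμ z

lemma meas_cyl_ne (hμ : IsMarkovChain P μ) (z : S) (j : ℕ) (x : Fin (j + 1) → S)
    (hx : x 0 ≠ z) : μ z (cyl j x) = 0 := by
  refine MeasureTheory.measure_mono_null ?_ (meas_start_compl hμ z)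
  intro ω hω
  have h0 : ω 0 = x 0 := hω 0
  simp only [Set.mem_setOf_eq]
  rw [h0]
  exact hx

lemma meas_cyl (hμ : IsMarkovChain P μ) (z : S) (j : ℕ) (x : Fin (j + 1) → S)
    (hx : x 0 = z) :
    μ z (cyl j x) = ENNReal.ofReal (∏ i : Fin j, P (x i.castSucc) (x i.succ)) := by
  set xe : ℕ → S := fun n => x ⟨min n j, by omega⟩ with hxe
  have hxei : ∀ i : Fin (j + 1), xe i = x i := by
    intro i
    have hmin : min (i : ℕ) j = (i : ℕ) := Nat.min_eq_left (Nat.lt_succ_iff.mp i.isLt)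
    simp only [hxe]
    congr 1
    exact Fin.ext hmin
  have h0 : xe 0 = z := by
    have := hxei 0
    simpa [hx] using this
  have hset : cyl j x = {ω : ℕ → S | ∀ i ≤ j, ω i = xe i} := by
    ext ω
    constructor
    · intro h i hi
      rw [show xe i = x ⟨i, Nat.lt_succ_of_le hi⟩ from hxei ⟨i, Nat.lt_succ_of_le hi⟩]
      exact h ⟨i, Nat.lt_succ_of_le hi⟩
    · intro h i
      rw [← hxei i]
      exact h i (Nat.lt_succ_iff.mp i.isLt)
  have hm := hμ.2 j xe
  rw [h0] at hm
  rw [hset, hm]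
  congr 1
  rw [Finset.prod_range fun i => P (xe i) (xe (i + 1))]
  refine Finset.prod_congr rfl fun i _ => ?_
  congr 1
  · exact hxei i.castSucc
  · exact hxei i.succ

lemma matrix_pow_nonneg {ι : Type*} [Fintype ι] [DecidableEq ι] {M : Matrix ι ι ℝ}
    (h : ∀ a b, 0 ≤ M a b) : ∀ (n : ℕ) (a b : ι), 0 ≤ (M ^ n) a b := by
  intro n
  induction n with
  | zero =>
    intro a b
    rw [pow_zero, Matrix.one_apply]
    split_ifs <;> norm_num
  | succ n ih =>
    intro a b
    rw [pow_succ, Matrix.mul_apply]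
    exact Finset.sum_nonneg fun c _ => mul_nonneg (ih a c) (h c b)

lemma path_sum {ι : Type*} [Fintype ι] [DecidableEq ι] (M : Matrix ι ι ℝ) :
    ∀ (j : ℕ) (ν h : ι → ℝ),
      ∑ y : Fin (j + 1) → ι,
          (ν (y 0) * ∏ i : Fin j, M (y i.castSucc) (y i.succ)) * h (y (Fin.last j))
        = ∑ w, Matrix.vecMul ν (M ^ j) w * h w := by
  intro j
  induction j with
  | zero =>
    intro ν h
    rw [← (Equiv.funUnique (Fin 1) ι).symm.sum_comp]
    simp [Matrix.vecMul_one]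
  | succ n ih =>
    intro ν h
    rw [← ((Fin.consEquiv (fun _ : Fin (n + 2) => ι)).sum_comp
      (fun y : Fin (n + 2) → ι =>
        (ν (y 0) * ∏ i : Fin (n + 1), M (y i.castSucc) (y i.succ)) * h (y (Fin.last (n + 1)))))]
    have key : ∀ (a : ι) (y : Fin (n + 1) → ι),
        (ν (Fin.cons (α := fun _ => ι) a y 0) * ∏ i : Fin (n + 1),
            M (Fin.cons (α := fun _ => ι) a y i.castSucc) (Fin.cons (α := fun _ => ι) a y i.succ)) *
            h (Fin.cons (α := fun _ => ι) a y (Fin.last (n + 1)))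
        = (ν a * M a (y 0) * ∏ i : Fin n, M (y i.castSucc) (y i.succ)) * h (y (Fin.last n)) := by
      intro a y
      have hlast : Fin.cons (α := fun _ => ι) a y (Fin.last (n + 1)) = y (Fin.last n) := by
        rw [← Fin.succ_last, Fin.cons_succ]
      have hprod : (∏ i : Fin (n + 1), M (Fin.cons (α := fun _ => ι) a y i.castSucc) (Fin.cons (α := fun _ => ι) a y i.succ))
          = M a (y 0) * ∏ i : Fin n, M (y i.castSucc) (y i.succ) := by
        rw [Fin.prod_univ_succ]
        refine congrArg₂ (· * ·) ?_ ?_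
        · simp
        · refine Finset.prod_congr rfl fun i _ => ?_
          rw [← Fin.succ_castSucc, Fin.cons_succ, Fin.cons_succ]
      rw [Fin.cons_zero, hlast, hprod]
      ring
    have hmid : ∀ y : Fin (n + 1) → ι,
        (∑ a : ι, (ν (Fin.cons (α := fun _ => ι) a y 0) * ∏ i : Fin (n + 1),
            M (Fin.cons (α := fun _ => ι) a y i.castSucc) (Fin.cons (α := fun _ => ι) a y i.succ)) *
            h (Fin.cons (α := fun _ => ι) a y (Fin.last (n + 1))))
        = (Matrix.vecMul ν M (y 0) * ∏ i : Fin n, M (y i.castSucc) (y i.succ)) *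
            h (y (Fin.last n)) := by
      intro y
      rw [Finset.sum_congr rfl fun a _ => key a y, ← Finset.sum_mul, ← Finset.sum_mul]
      congr 2 <;> simp [Matrix.vecMul, dotProduct]
    simp only [Fintype.sum_prod_type, Fin.consEquiv_apply]
    rw [Finset.sum_comm]
    rw [Finset.sum_congr rfl fun y (_ : y ∈ (Finset.univ : Finset (Fin (n + 1) → ι))) => hmid y]
    rw [ih (Matrix.vecMul ν M) h]
    exact Finset.sum_congr rfl fun w _ => by rw [Matrix.vecMul_vecMul, ← pow_succ']

end Aux

end MCTrunc

namespace MCTrunc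

section Main

open scoped Classical

variable {S : Type*} [Countable S] [DecidableEq S]
  [MeasurableSpace S] [MeasurableSingletonClass S]
variable {P : S → S → ℝ} {μ : S → MeasureTheory.Measure (ℕ → S)} {z : S} {A : Finset S}

/-- The summand at time `j` for the truncated sum, as a function of coordinates. -/
def gfun (A : Finset S) (z : S) (r : S → ℝ) (j : ℕ) (x : Fin (j + 1) → S) : ℝ≥0∞ :=
  if ∀ i : Fin (j + 1), x i ∈ A ∧ ((i : ℕ) ≠ 0 → x i ≠ z) then
    ENNReal.ofReal (r (x (Fin.last j))) else 0

lemma integrand_eq (r : S → ℝ) (ω : ℕ → S) :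
    sumBefore r (min (retTime z ω) (hitTime ((A : Set S))ᶜ ω)) ω
      = ∑' j : ℕ, gfun A z r j (fun i => ω i) := by
  unfold sumBefore sumOver gfun
  refine tsum_congr fun j => ?_
  have hcond : ((0 : ℕ∞) ≤ (j : ℕ∞) ∧
      (j : ℕ∞) < min (retTime z ω) (hitTime ((A : Set S))ᶜ ω)) ↔
      ∀ i : Fin (j + 1), ω i ∈ A ∧ ((i : ℕ) ≠ 0 → ω i ≠ z) := by
    rw [and_iff_right zero_le, lt_min_iff, lt_retTime_iff, lt_hitTime_iff]
    constructor
    · rintro ⟨hret, hhit⟩ i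
      refine ⟨?_, fun h0 => hret i (Nat.one_le_iff_ne_zero.mpr h0) (Nat.lt_succ_iff.mp i.isLt)⟩
      have := hhit i (Nat.lt_succ_iff.mp i.isLt)
      simpa using this
    · intro h
      constructor
      · intro n h1 hn
        exact (h ⟨n, Nat.lt_succ_of_le hn⟩).2 (Nat.one_le_iff_ne_zero.mp h1)
      · intro n hn
        simpa using (h ⟨n, Nat.lt_succ_of_le hn⟩).1
  by_cases h1 : ((0 : ℕ∞) ≤ (j : ℕ∞) ∧
      (j : ℕ∞) < min (retTime z ω) (hitTime ((A : Set S))ᶜ ω))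
  · rw [if_pos h1, if_pos (hcond.mp h1)]
    rfl
  · rw [if_neg h1, if_neg fun h => h1 (hcond.mpr h)]

lemma F_eq (r : S → ℝ) :
    ∫⁻ ω, sumBefore r (min (retTime z ω) (hitTime ((A : Set S))ᶜ ω)) ω ∂ μ z
      = ∑' j : ℕ, ∑' x : Fin (j + 1) → S, gfun A z r j x * μ z (cyl j x) := by
  have h1 : ∀ ω : ℕ → S, sumBefore r (min (retTime z ω) (hitTime ((A : Set S))ᶜ ω)) ω
      = ∑' j : ℕ, gfun A z r j (fun i => ω i) := integrand_eq r
  rw [show (fun ω => sumBefore r (min (retTime z ω) (hitTime ((A : Set S))ᶜ ω)) ω)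
      = fun ω => ∑' j : ℕ, gfun A z r j (fun i => ω i) from funext h1]
  rw [MeasureTheory.lintegral_tsum fun j => (measurable_coords j (gfun A z r j)).aemeasurable]
  exact tsum_congr fun j => lintegral_coords (μ z) j (gfun A z r j)

lemma F_zero (hμ : IsMarkovChain P μ) (hzA : z ∈ A) (r : S → ℝ) :
    ∑' x : Fin 1 → S, gfun A z r 0 x * μ z (cyl 0 x) = ENNReal.ofReal (r z) := by
  rw [tsum_eq_single (fun _ : Fin 1 => z) ?_]
  · have hg : gfun A z r 0 (fun _ : Fin 1 => z) = ENNReal.ofReal (r z) := by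
      unfold gfun
      rw [if_pos]
      exact fun i => ⟨hzA, fun h0 => absurd (Nat.lt_one_iff.mp i.isLt) h0⟩
    rw [hg, meas_cyl hμ z 0 _ rfl]
    simp
  · intro x hx
    have hx0 : x 0 ≠ z := by
      intro h
      apply hx
      funext i
      rw [Subsingleton.elim i 0, h]
    rw [meas_cyl_ne hμ z 0 x hx0, mul_zero]

lemma F_succ (hμ : IsMarkovChain P μ) (hP : IsStochasticMatrix P) (hzA : z ∈ A)
    (r : S → ℝ) (hr : ∀ x, 0 ≤ r x) (n : ℕ) :
    ∑' x : Fin (n + 2) → S, gfun A z r (n + 1) x * μ z (cyl (n + 1) x)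
      = ENNReal.ofReal (dotProduct
          (Matrix.vecMul (trNu P z A) ((trB P z A) ^ n)) (trRes r z A)) := by
  set ι := ↥(A.erase z) with hι
  set e : (Fin (n + 1) → ι) → (Fin (n + 2) → S) :=
    fun y => Fin.cons (α := fun _ => S) z (fun i => (y i : S)) with he
  have einj : Function.Injective e := by
    intro y1 y2 h
    funext i
    have h2 := congrFun h i.succ
    simp only [he, Fin.cons_succ] at h2
    exact Subtype.ext h2
  have hsupp : ∀ x : Fin (n + 2) → S, x ∉ Finset.image e Finset.univ →
      gfun A z r (n + 1) x * μ z (cyl (n + 1) x) = 0 := by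
    intro x hx
    by_contra hne
    have hg : gfun A z r (n + 1) x ≠ 0 := fun h => hne (by rw [h, zero_mul])
    have hm : μ z (cyl (n + 1) x) ≠ 0 := fun h => hne (by rw [h, mul_zero])
    have hx0 : x 0 = z := by
      by_contra h
      exact hm (meas_cyl_ne hμ z (n + 1) x h)
    have hcond : ∀ i : Fin (n + 2), x i ∈ A ∧ ((i : ℕ) ≠ 0 → x i ≠ z) := by
      by_contra h
      exact hg (if_neg h)
    apply hx
    refine Finset.mem_image.mpr ⟨fun i => ⟨x i.succ, ?_⟩, Finset.mem_univ _, ?_⟩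
    · rcases hcond i.succ with ⟨hA, hne'⟩
      exact Finset.mem_erase.mpr ⟨hne' (by simp), hA⟩
    · funext i
      refine Fin.cases ?_ ?_ i
      · simpa [he] using hx0.symm
      · intro k
        simp [he, Fin.cons_succ]
  rw [tsum_eq_sum hsupp, Finset.sum_image fun y1 _ y2 _ h => einj h]
  have hterm : ∀ y : Fin (n + 1) → ι,
      gfun A z r (n + 1) (e y) * μ z (cyl (n + 1) (e y))
        = ENNReal.ofReal ((trNu P z A (y 0) *
            ∏ i : Fin n, trB P z A (y i.castSucc) (y i.succ)) * trRes r z A (y (Fin.last n))) := by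
    intro y
    have hcond : ∀ i : Fin (n + 2), e y i ∈ A ∧ ((i : ℕ) ≠ 0 → e y i ≠ z) := by
      intro i
      refine Fin.cases ?_ ?_ i
      · refine ⟨by simpa [he] using hzA, fun h0 => absurd rfl h0⟩
      · intro k
        have hk := (y k).2
        rw [Finset.mem_erase] at hk
        have hek : e y k.succ = ((y k : S)) := by simp [he]
        rw [hek]
        exact ⟨hk.2, fun _ => hk.1⟩
    have hg : gfun A z r (n + 1) (e y) = ENNReal.ofReal (r (y (Fin.last n))) := by
      unfold gfun
      have hl : e y (Fin.last (n + 1)) = ((y (Fin.last n) : S)) := by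
        rw [← Fin.succ_last]
        exact Fin.cons_succ (α := fun _ : Fin (n + 2) => S) z (fun i => ((y i : S))) (Fin.last n)
      rw [if_pos hcond, hl]
    have hμc : μ z (cyl (n + 1) (e y)) = ENNReal.ofReal
        (P z (y 0) * ∏ i : Fin n, P ((y i.castSucc : S)) ((y i.succ : S))) := by
      rw [meas_cyl hμ z (n + 1) (e y) (by simp [he])]
      congr 1
      rw [Fin.prod_univ_succ]
      refine congrArg₂ (· * ·) ?_ ?_
      · simp [he]
      · refine Finset.prod_congr rfl fun i _ => ?_
        refine congrArg₂ P ?_ ?_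
        · rw [← Fin.succ_castSucc]
          simp [he]
        · simp [he]
    rw [hg, hμc, ← ENNReal.ofReal_mul (hr _), mul_comm]
    rfl
  rw [Finset.sum_congr rfl fun y _ => hterm y]
  rw [← ENNReal.ofReal_sum_of_nonneg (f := fun y : Fin (n + 1) → ι =>
      (trNu P z A (y 0) * ∏ i : Fin n, trB P z A (y i.castSucc) (y i.succ)) *
        trRes r z A (y (Fin.last n)))
    (fun y _ => mul_nonneg
      (mul_nonneg (hP.1 z _) (Finset.prod_nonneg fun i _ => hP.1 _ _)) (hr _))]
  congr 1
  rw [path_sum (trB P z A) n (trNu P z A) (trRes r z A)]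
  rfl

lemma hasSum_dot (hP : IsStochasticMatrix P)
    (hsum : ∀ x y : ↥(A.erase z),
      HasSum (fun j : ℕ => ((trB P z A) ^ j) x y) ((1 - trB P z A)⁻¹ x y))
    (r : S → ℝ) :
    HasSum (fun n : ℕ => dotProduct
        (Matrix.vecMul (trNu P z A) ((trB P z A) ^ n)) (trRes r z A))
      (dotProduct (Matrix.vecMul (trNu P z A) (1 - trB P z A)⁻¹) (trRes r z A)) := by
  have h1 : ∀ y : ↥(A.erase z), HasSum
      (fun n : ℕ => ∑ x, trNu P z A x * ((trB P z A) ^ n) x y * trRes r z A y)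
      (∑ x, trNu P z A x * (1 - trB P z A)⁻¹ x y * trRes r z A y) :=
    fun y => hasSum_sum fun x _ => ((hsum x y).mul_left (trNu P z A x)).mul_right (trRes r z A y)
  have h2 := hasSum_sum (f := fun (y : ↥(A.erase z)) (n : ℕ) =>
      ∑ x, trNu P z A x * ((trB P z A) ^ n) x y * trRes r z A y)
    (s := Finset.univ) fun y _ => h1 y
  have heq : ∀ M : Matrix ↥(A.erase z) ↥(A.erase z) ℝ,
      dotProduct (Matrix.vecMul (trNu P z A) M) (trRes r z A)
        = ∑ y, ∑ x, trNu P z A x * M x y * trRes r z A y := by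
    intro M
    simp [dotProduct, Matrix.vecMul, Finset.sum_mul]
  have hfun : (fun n : ℕ => dotProduct
      (Matrix.vecMul (trNu P z A) ((trB P z A) ^ n)) (trRes r z A))
      = fun n : ℕ => ∑ y, ∑ x, trNu P z A x * ((trB P z A) ^ n) x y * trRes r z A y :=
    funext fun n => heq _
  rw [hfun, heq]
  exact h2

lemma dot_nonneg (hP : IsStochasticMatrix P) (r : S → ℝ) (hr : ∀ x, 0 ≤ r x)
    (M : Matrix ↥(A.erase z) ↥(A.erase z) ℝ) (hM : ∀ a b, 0 ≤ M a b) :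
    0 ≤ dotProduct (Matrix.vecMul (trNu P z A) M) (trRes r z A) := by
  have heq : dotProduct (Matrix.vecMul (trNu P z A) M) (trRes r z A)
      = ∑ y, ∑ x, trNu P z A x * M x y * trRes r z A y := by
    simp [dotProduct, Matrix.vecMul, Finset.sum_mul]
  rw [heq]
  exact Finset.sum_nonneg fun y _ => Finset.sum_nonneg fun x _ =>
    mul_nonneg (mul_nonneg (hP.1 z _) (hM x y)) (hr _)

lemma key_eq (hP : IsStochasticMatrix P) (hμ : IsMarkovChain P μ) (hzA : z ∈ A)
    (hsum : ∀ x y : ↥(A.erase z),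
      HasSum (fun j : ℕ => ((trB P z A) ^ j) x y) ((1 - trB P z A)⁻¹ x y))
    (r : S → ℝ) (hr : ∀ x, 0 ≤ r x) :
    ENNReal.ofReal (r z + dotProduct
        (Matrix.vecMul (trNu P z A) (1 - trB P z A)⁻¹) (trRes r z A))
      = ∫⁻ ω, sumBefore r (min (retTime z ω) (hitTime ((A : Set S))ᶜ ω)) ω ∂ μ z := by
  have hd := hasSum_dot hP hsum r
  have hBnn : ∀ a b, 0 ≤ trB P z A a b := fun a b => hP.1 _ _
  have hnn : ∀ n : ℕ, 0 ≤ dotProduct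
      (Matrix.vecMul (trNu P z A) ((trB P z A) ^ n)) (trRes r z A) :=
    fun n => dot_nonneg hP r hr _ (matrix_pow_nonneg hBnn n)
  rw [F_eq r, tsum_eq_zero_add' ENNReal.summable, F_zero hμ hzA r]
  rw [show (fun n : ℕ => ∑' x : Fin (n + 1 + 1) → S,
      gfun A z r (n + 1) x * μ z (cyl (n + 1) x))
    = fun n : ℕ => ENNReal.ofReal (dotProduct
        (Matrix.vecMul (trNu P z A) ((trB P z A) ^ n)) (trRes r z A))
    from funext fun n => F_succ hμ hP hzA r hr n]
  rw [← ENNReal.ofReal_tsum_of_nonneg hnn hd.summable, hd.tsum_eq]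
  exact ENNReal.ofReal_add (hr z) (hd.nonneg hnn)

lemma key_le (r : S → ℝ) :
    (∫⁻ ω, sumBefore r (min (retTime z ω) (hitTime ((A : Set S))ᶜ ω)) ω ∂ μ z)
      ≤ ∫⁻ ω, sumBefore r (retTime z ω) ω ∂ μ z := by
  refine MeasureTheory.lintegral_mono fun ω => ?_
  unfold sumBefore sumOver
  refine Summable.tsum_le_tsum (fun j => ?_) ENNReal.summable ENNReal.summable
  split_ifs with h1 h2
  · exact le_rfl
  · exact absurd ⟨h1.1, lt_of_lt_of_le h1.2 (min_le_left _ _)⟩ h2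
  · exact zero_le
  · exact le_rfl

end Main

end MCTrunc

open MCTrunc in
/-- lower bound for the regenerative numerator:
`κ̲(r) = r(z) + ν̃ (I - B̃)⁻¹ r̃ = E_z[∑_{j<τ(z)∧T} r(X_j)] ≤ E_z[∑_{j<τ(z)} r(X_j)]`,
and in particular `κ̲(e) = 1 + ν̃ (I - B̃)⁻¹ ẽ ≤ E_z[τ(z)]`. -/
theorem lower_bound_regenerative_numerator
    {S : Type*} [Countable S] [DecidableEq S]
    [MeasurableSpace S] [MeasurableSingletonClass S]
    (P : S → S → ℝ) (μ : S → MeasureTheory.Measure (ℕ → S)) (z : S) (A : Finset S)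
    (hP : IsStochasticMatrix P) (hirr : IsIrreducibleMatrix P)
    (hμ : IsMarkovChain P μ) (hpos : IsPositiveRecurrent μ) (hzA : z ∈ A)
    (hsum : ∀ x y : ↥(A.erase z),
      HasSum (fun j : ℕ => ((trB P z A) ^ j) x y) ((1 - trB P z A)⁻¹ x y))
    (r : S → ℝ) (hr : ∀ x, 0 ≤ r x) :
    (ENNReal.ofReal (r z + dotProduct
        (Matrix.vecMul (trNu P z A) (1 - trB P z A)⁻¹) (trRes r z A))
      = ∫⁻ ω, sumBefore r (min (retTime z ω) (hitTime ((A : Set S))ᶜ ω)) ω ∂ μ z) ∧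
    ((∫⁻ ω, sumBefore r (min (retTime z ω) (hitTime ((A : Set S))ᶜ ω)) ω ∂ μ z)
      ≤ ∫⁻ ω, sumBefore r (retTime z ω) ω ∂ μ z) ∧
    (ENNReal.ofReal (1 + dotProduct
        (Matrix.vecMul (trNu P z A) (1 - trB P z A)⁻¹) (trE z A))
      ≤ ∫⁻ ω, sumBefore (fun _ => 1) (retTime z ω) ω ∂ μ z) := by
  refine ⟨key_eq hP hμ hzA hsum r hr, key_le r, ?_⟩
  have h1 := key_eq (μ := μ) hP hμ hzA hsum (fun _ => (1 : ℝ)) (fun _ => zero_le_one)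
  exact le_of_eq_of_le h1 (key_le (μ := μ) (fun _ => (1 : ℝ)))
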